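/- Let F be a group and p a prime. Suppose a subgroup H of F has the property that φ(H) = φ(F) for every homomorphism φ from F onto a finite group G having a normal abelian p-subgroup N with G/N abelian of exponent dividing p−1. Then φ(H) = φ(F) for every homomorphism φ from F onto a finite group G having a normal p-subgroup N with G/N abelian of exponent dividing p−1. -/

import Mathlib

universe u

open Subgroup Pointwise

open scoped commutatorElement

/-- In a finite `p`-group, the commutator subgroup is contained in the
Frattini subgroup. -/
lemma aux_commutator_le_frattini {p : ℕ} (hp : p.Prime) {N : Type*} [Group N] [Finite N]
    (hN : IsPGroup p N) : ⁅(⊤ : Subgroup N), (⊤ : Subgroup N)⁆ ≤ frattini N := by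
  haveI : Fact p.Prime := ⟨hp⟩
  haveI hnil : Group.IsNilpotent N := hN.isNilpotent
  have hnc : NormalizerCondition N := normalizerCondition_of_isNilpotent
  rw [frattini, Order.radical]
  refine le_iInf₂ fun M hM => ?_
  haveI hMn : M.Normal := NormalizerCondition.normal_of_coatom M hnc hM
  set π := QuotientGroup.mk' M with hπ
  have hπs : Function.Surjective π := QuotientGroup.mk'_surjective M
  obtain ⟨x, hx1⟩ : ∃ x : N ⧸ M, x ≠ 1 := by
    by_contra hcon
    push_neg at hcon
    refine hM.1 ?_
    rw [eq_top_iff]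
    intro g _
    have := hcon (π g)
    rwa [QuotientGroup.mk'_apply, QuotientGroup.eq_one_iff] at this
  -- the quotient is generated by `x`, hence cyclic, hence commutative
  have hz : Subgroup.zpowers x = ⊤ := by
    obtain ⟨g, hg⟩ := hπs x
    have h1 : M ≤ (Subgroup.zpowers x).comap π := by
      intro m hm
      have : π m = 1 := (QuotientGroup.eq_one_iff m).mpr hm
      simp [Subgroup.mem_comap, this, Subgroup.one_mem]
    have h2 : (Subgroup.zpowers x).comap π ≠ M := by
      intro hEq
      apply hx1
      have : g ∈ (Subgroup.zpowers x).comap π := by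
        simp [Subgroup.mem_comap, hg, Subgroup.mem_zpowers]
      rw [hEq] at this
      rw [← hg]
      exact (QuotientGroup.eq_one_iff g).mpr this
    have h3 : (Subgroup.zpowers x).comap π = ⊤ :=
      hM.2 _ (lt_of_le_of_ne h1 (Ne.symm h2))
    have := Subgroup.map_comap_eq_self_of_surjective (f := π) hπs (Subgroup.zpowers x)
    rw [h3] at this
    rw [← this]
    exact (Subgroup.map_top_of_surjective π hπs)
  have hcomm : ∀ a b : N ⧸ M, a * b = b * a := by
    intro a b
    have ha : a ∈ Subgroup.zpowers x := hz ▸ Subgroup.mem_top a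
    have hb : b ∈ Subgroup.zpowers x := hz ▸ Subgroup.mem_top b
    obtain ⟨m, rfl⟩ := Subgroup.mem_zpowers_iff.mp ha
    obtain ⟨n, rfl⟩ := Subgroup.mem_zpowers_iff.mp hb
    exact ((Commute.refl x).zpow_zpow m n)
  refine Subgroup.commutator_le.mpr fun g₁ _ g₂ _ => ?_
  have : π ⁅g₁, g₂⁆ = 1 := by
    rw [map_commutatorElement]
    exact commutatorElement_eq_one_iff_mul_comm.mpr (hcomm _ _)
  exact (QuotientGroup.eq_one_iff _).mp this

/-- Nongenerating property: in a finite `p`-group, a subgroup which together with the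
commutator subgroup generates the whole group is the whole group. -/
lemma aux_pgroup_nongenerating {p : ℕ} (hp : p.Prime) {N : Type*} [Group N] [Finite N]
    (hN : IsPGroup p N) {K : Subgroup N}
    (h : K ⊔ ⁅(⊤ : Subgroup N), (⊤ : Subgroup N)⁆ = ⊤) : K = ⊤ := by
  apply frattini_nongenerating
  rw [eq_top_iff]
  calc ⊤ = K ⊔ ⁅(⊤ : Subgroup N), (⊤ : Subgroup N)⁆ := h.symm
    _ ≤ K ⊔ frattini N := sup_le_sup_left (aux_commutator_le_frattini hp hN) K

/-- If a subgroup `H` of `F` satisfies `φ(H) = φ(F)` for every surjective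
homomorphism `φ` from `F` onto a finite group having a normal *abelian*
`p`-subgroup `N` with quotient abelian of exponent dividing `p-1`, then
`φ(H) = φ(F)` for every surjective homomorphism from `F` onto a finite group
having a normal `p`-subgroup `N` with quotient abelian of exponent dividing
`p-1`.  (Ab_p*Ab_{p-1}-denseness implies H_p-denseness.) -/
theorem hp_dense_of_abp_abpm1_dense {F : Type u} [Group F] (p : ℕ) (hp : p.Prime)
    (H : Subgroup F)
    (h : ∀ (G : Type u) [Group G] [Finite G] (φ : F →* G), Function.Surjective φ →
      (∃ N : Subgroup G, N.Normal ∧ IsPGroup p N ∧ (∀ x y : ↥N, x * y = y * x) ∧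
        (∀ x y : G, ⁅x, y⁆ ∈ N) ∧ (∀ x : G, x ^ (p - 1) ∈ N)) →
      H.map φ = ⊤) :
    ∀ (G : Type u) [Group G] [Finite G] (φ : F →* G), Function.Surjective φ →
      (∃ N : Subgroup G, N.Normal ∧ IsPGroup p N ∧
        (∀ x y : G, ⁅x, y⁆ ∈ N) ∧ (∀ x : G, x ^ (p - 1) ∈ N)) →
      H.map φ = ⊤ := by
  intro G _ _ φ hφ ⟨N, hNnorm, hNp, hNcomm, hNpow⟩
  haveI := hNnorm
  -- quotient by the commutator subgroup of N
  set D : Subgroup G := ⁅N, N⁆ with hD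
  haveI hDnorm : D.Normal := Subgroup.commutator_normal N N
  have hDleN : D ≤ N := Subgroup.commutator_le_right N N
  set π := QuotientGroup.mk' D with hπdef
  have hπs : Function.Surjective π := QuotientGroup.mk'_surjective D
  -- apply the hypothesis to G ⧸ D
  have key : H.map ((π : G →* G ⧸ D).comp φ) = ⊤ := by
    refine h (G ⧸ D) ((π : G →* G ⧸ D).comp φ) (hπs.comp hφ) ?_
    refine ⟨N.map π, hNnorm.map π hπs, hNp.map π, ?_, ?_, ?_⟩
    · rintro ⟨x, hx⟩ ⟨y, hy⟩
      obtain ⟨a, ha, rfl⟩ := hx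
      obtain ⟨b, hb, rfl⟩ := hy
      have : ⁅π a, π b⁆ = 1 := by
        rw [← map_commutatorElement]
        exact (QuotientGroup.eq_one_iff _).mpr (Subgroup.commutator_mem_commutator ha hb)
      have hmc := commutatorElement_eq_one_iff_mul_comm.mp this
      ext
      exact hmc
    · intro x y
      obtain ⟨a, rfl⟩ := hπs x
      obtain ⟨b, rfl⟩ := hπs y
      rw [← map_commutatorElement]
      exact Subgroup.mem_map_of_mem π (hNcomm a b)
    · intro x
      obtain ⟨a, rfl⟩ := hπs x
      rw [← map_pow]
      exact Subgroup.mem_map_of_mem π (hNpow a)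
  -- deduce that (H.map φ) ⊔ D = ⊤
  set K := H.map φ with hK
  have hmap : K.map π = ⊤ := by
    rw [hK, Subgroup.map_map]
    exact key
  have hKD : K ⊔ D = ⊤ := by
    have := congrArg (Subgroup.comap π) hmap
    rwa [Subgroup.comap_map_eq, QuotientGroup.ker_mk',
      Subgroup.comap_top] at this
  -- now show N ≤ K using the nongenerating property inside N
  have hNK : N ≤ K := by
    rw [← Subgroup.subgroupOf_eq_top (H := K) (K := N)]
    refine aux_pgroup_nongenerating hp hNp ?_
    rw [eq_top_iff]
    rintro ⟨n, hn⟩ _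
    -- n ∈ ⊤ = K ⊔ D, and D is normal, so n = k * d
    have hnKD : n ∈ K ⊔ D := hKD ▸ Subgroup.mem_top n
    have hnKD' : n ∈ ((K : Set G) * (D : Set G)) := by
      rw [← Subgroup.mul_normal K D]; exact hnKD
    obtain ⟨k, hk, d, hd, rfl⟩ := hnKD'
    have hdN : d ∈ N := hDleN hd
    have hkN : k ∈ N := by
      have : k = (k * d) * d⁻¹ := by group
      rw [this]
      exact Subgroup.mul_mem N hn (Subgroup.inv_mem N hdN)
    have hmul : (⟨k * d, hn⟩ : ↥N) = (⟨k, hkN⟩ : ↥N) * ⟨d, hdN⟩ := rfl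
    rw [hmul]
    refine Subgroup.mul_mem _ (le_sup_left (α := Subgroup ↥N) ?_)
      (le_sup_right (α := Subgroup ↥N) ?_)
    · exact hk
    · -- d, as an element of N, lies in the commutator subgroup of ↥N
      have hDsub : D.subgroupOf N = ⁅(⊤ : Subgroup ↥N), (⊤ : Subgroup ↥N)⁆ := by
        have hmapD : (⁅(⊤ : Subgroup ↥N), (⊤ : Subgroup ↥N)⁆).map N.subtype = D := by
          rw [Subgroup.map_commutator, ← MonoidHom.range_eq_map,
            Subgroup.range_subtype]
        rw [Subgroup.subgroupOf, ← hmapD,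
          Subgroup.comap_map_eq_self_of_injective N.subtype_injective]
      rw [← hDsub]
      exact hd
  rw [eq_top_iff, ← hKD]
  exact sup_le le_rfl (hDleN.trans hNK)
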